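/- Let X^n be a random vector on {0,1}^n, let Y^n(t) be its output through a memoryless BEC with survival probability t, and let Z^n be obtained from Y^n(t) by further passing each coordinate through an independent erasure channel with survival probability t' = t₁/t (so Z^n is the output of a BEC with survival probability t₁ ≤ t). Then I(X^n; Z^n) ≥ t'·I(X^n; Y^n(t)). -/

import Mathlib

open Finset

/-- Shannon entropy (in bits) of a pmf on a finite type (convention `0·log 0 = 0`
holds since `Real.logb 2 0 = 0`). -/
noncomputable def H2 {α : Type*} [Fintype α] (p : α → ℝ) : ℝ :=
  -∑ x, p x * Real.logb 2 (p x)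

/-- `p` is a probability mass function. -/
def IsPMF {α : Type*} [Fintype α] (p : α → ℝ) : Prop :=
  (∀ x, 0 ≤ p x) ∧ ∑ x, p x = 1

/-- Left marginal of a joint pmf. -/
noncomputable def margL {α β : Type*} [Fintype α] [Fintype β] (p : α × β → ℝ) : α → ℝ :=
  fun a => ∑ b, p (a, b)

/-- Right marginal of a joint pmf. -/
noncomputable def margR {α β : Type*} [Fintype α] [Fintype β] (p : α × β → ℝ) : β → ℝ :=
  fun b => ∑ a, p (a, b)

/-- Mutual information (in bits) of a joint pmf: `I = H(X) + H(Y) - H(X,Y)`. -/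
noncomputable def MI {α β : Type*} [Fintype α] [Fintype β] (p : α × β → ℝ) : ℝ :=
  H2 (margL p) + H2 (margR p) - H2 p

/-- Binary erasure channel on `Bool` with survival probability `t`
(erasure probability `1 - t`); `none` is the erasure symbol. -/
noncomputable def becW (t : ℝ) (x : Bool) : Option Bool → ℝ :=
  fun y => match y with
  | none => 1 - t
  | some b => if b = x then t else 0

namespace BECaux
variable {n : ℕ}

def mask (σ x : Fin n → Bool) : Fin n → Bool := fun i => σ i && x i

noncomputable def marg (σ : Fin n → Bool) (p : (Fin n → Bool) → ℝ) : (Fin n → Bool) → ℝ :=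
  fun z => if mask σ z = z then ∑ x, (if mask σ x = z then p x else 0) else 0

lemma mask_idem (σ x : Fin n → Bool) : mask σ (mask σ x) = mask σ x := by
  funext i; cases h : σ i <;> simp [mask, h]

lemma mask_mask {σ τ : Fin n → Bool} (h : ∀ i, σ i = true → τ i = true) (x : Fin n → Bool) :
    mask σ (mask τ x) = mask σ x := by
  funext i
  cases hσ : σ i
  · simp [mask, hσ]
  · simp [mask, hσ, h i hσ]

lemma sum_marg_mul (σ : Fin n → Bool) (p : (Fin n → Bool) → ℝ) (f : (Fin n → Bool) → ℝ) :
    ∑ z, marg σ p z * f z = ∑ x, p x * f (mask σ x) := by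
  have h1 : ∀ z, marg σ p z * f z = ∑ x, if mask σ x = z then p x * f z else 0 := by
    intro z
    unfold marg
    by_cases hz : mask σ z = z
    · rw [if_pos hz, Finset.sum_mul]
      exact Finset.sum_congr rfl fun x _ => by split_ifs <;> simp
    · rw [if_neg hz, zero_mul]
      symm; apply Finset.sum_eq_zero
      intro x _
      rw [if_neg]
      intro h; exact hz (by rw [← h, mask_idem])
  simp_rw [h1]
  rw [Finset.sum_comm]
  refine Finset.sum_congr rfl fun x _ => ?_
  rw [Finset.sum_ite_eq univ (mask σ x) (fun z => p x * f z)]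
  simp

lemma marg_nonneg {p : (Fin n → Bool) → ℝ} (hp0 : ∀ x, 0 ≤ p x) (σ z : Fin n → Bool) :
    0 ≤ marg σ p z := by
  unfold marg
  split_ifs
  · exact Finset.sum_nonneg fun x _ => by split_ifs <;> simp [hp0 x]
  · exact le_refl 0

lemma sum_marg {p : (Fin n → Bool) → ℝ} (hp : IsPMF p) (σ : Fin n → Bool) :
    ∑ z, marg σ p z = 1 := by
  have := sum_marg_mul σ p (fun _ => 1)
  simpa [hp.2] using this

lemma marg_not_masked {p : (Fin n → Bool) → ℝ} {σ z : Fin n → Bool} (h : mask σ z ≠ z) :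
    marg σ p z = 0 := if_neg h

lemma marg_apply (σ : Fin n → Bool) (p : (Fin n → Bool) → ℝ) (x : Fin n → Bool) :
    marg σ p (mask σ x) = ∑ x', if mask σ x' = mask σ x then p x' else 0 :=
  if_pos (mask_idem σ x)

lemma le_marg {p : (Fin n → Bool) → ℝ} (hp0 : ∀ x, 0 ≤ p x) (σ x : Fin n → Bool) :
    p x ≤ marg σ p (mask σ x) := by
  rw [marg_apply]
  have := Finset.single_le_sum (f := fun x' => if mask σ x' = mask σ x then p x' else 0)
    (fun x' _ => by split_ifs <;> simp [hp0 x']) (Finset.mem_univ x)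
  simpa using this

lemma marg_mono {p : (Fin n → Bool) → ℝ} (hp0 : ∀ x, 0 ≤ p x) {σ τ : Fin n → Bool}
    (h : ∀ i, σ i = true → τ i = true) (x : Fin n → Bool) :
    marg τ p (mask τ x) ≤ marg σ p (mask σ x) := by
  rw [marg_apply, marg_apply]
  apply Finset.sum_le_sum
  intro x' _
  by_cases hx : mask τ x' = mask τ x
  · rw [if_pos hx, if_pos (by rw [← mask_mask h x', hx, mask_mask h])]
  · split_ifs <;> simp [hp0 x']

end BECaux

namespace BECaux
variable {n : ℕ}

lemma H2_marg (σ : Fin n → Bool) (p : (Fin n → Bool) → ℝ) :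
    H2 (marg σ p) = -∑ x, p x * Real.logb 2 (marg σ p (mask σ x)) := by
  unfold H2
  rw [sum_marg_mul σ p (fun z => Real.logb 2 (marg σ p z))]

lemma H2_marg_false {p : (Fin n → Bool) → ℝ} (hp : IsPMF p) {τ : Fin n → Bool}
    (h : ∀ i, τ i = false) : H2 (marg τ p) = 0 := by
  rw [H2_marg]
  have hm : ∀ x : Fin n → Bool, marg τ p (mask τ x) = 1 := by
    intro x
    rw [marg_apply]
    rw [← hp.2]
    refine Finset.sum_congr rfl fun x' _ => ?_
    rw [if_pos]
    funext i; simp [mask, h i]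
  simp [hm]

lemma marg_fiber {p : (Fin n → Bool) → ℝ} {w B : Fin n → Bool}
    (hwB : ∀ i, w i = true → B i = true) {v : Fin n → Bool} (hv : mask w v = v) :
    ∑ b, (if mask w b = v then marg B p b else 0) = marg w p v := by
  have h1 : ∀ b : Fin n → Bool, (if mask w b = v then marg B p b else 0)
      = marg B p b * (if mask w b = v then 1 else 0) := by
    intro b; split_ifs <;> simp
  simp_rw [h1]
  rw [sum_marg_mul B p (fun z => if mask w z = v then 1 else 0)]
  simp_rw [mask_mask hwB]
  unfold marg
  rw [if_pos hv]
  refine Finset.sum_congr rfl fun x _ => ?_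
  split_ifs <;> simp

end BECaux

namespace BECaux
variable {n : ℕ}

lemma submod {p : (Fin n → Bool) → ℝ} (hp : IsPMF p) (A B : Fin n → Bool) :
    H2 (marg (fun i => A i || B i) p) + H2 (marg (fun i => A i && B i) p)
      ≤ H2 (marg A p) + H2 (marg B p) := by
  have hp0 := hp.1
  set u : Fin n → Bool := fun i => A i || B i with hu
  set w : Fin n → Bool := fun i => A i && B i with hw
  have hAu : ∀ i, A i = true → u i = true := fun i h => by simp [hu, h]
  have hBu : ∀ i, B i = true → u i = true := fun i h => by simp [hu, h]
  have hwA : ∀ i, w i = true → A i = true := fun i h => by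
    simp only [hw] at h; exact (Bool.and_eq_true _ _ |>.mp h).1
  have hwB : ∀ i, w i = true → B i = true := fun i h => by
    simp only [hw] at h; exact (Bool.and_eq_true _ _ |>.mp h).2
  have hwu : ∀ i, w i = true → u i = true := fun i h => hAu i (hwA i h)
  set MA : (Fin n → Bool) → ℝ := fun x => marg A p (mask A x) with hMA
  set MB : (Fin n → Bool) → ℝ := fun x => marg B p (mask B x) with hMB
  set Mu : (Fin n → Bool) → ℝ := fun x => marg u p (mask u x) with hMu
  set Mw : (Fin n → Bool) → ℝ := fun x => marg w p (mask w x) with hMw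
  set r : (Fin n → Bool) → ℝ := fun x => MA x * MB x / (Mu x * Mw x) with hr
  -- The key claim : ∑ p x * r x ≤ 1
  have claim : ∑ x, p x * r x ≤ 1 := by
    have e1 : ∑ x, p x * r x = ∑ z, marg u p z *
        (fun z => marg A p (mask A z) * marg B p (mask B z) /
          (marg u p (mask u z) * marg w p (mask w z))) z := by
      rw [sum_marg_mul]
      refine Finset.sum_congr rfl fun x _ => ?_
      simp only [mask_mask hAu, mask_mask hBu, mask_idem, mask_mask hwu, hr, hMA, hMB, hMu, hMw]
    have e2 : ∑ z, marg u p z *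
        (fun z => marg A p (mask A z) * marg B p (mask B z) /
          (marg u p (mask u z) * marg w p (mask w z))) z ≤
        ∑ z, (if mask u z = z then
          marg A p (mask A z) * marg B p (mask B z) / marg w p (mask w z) else 0) := by
      apply Finset.sum_le_sum
      intro z _
      by_cases hz : mask u z = z
      · rw [if_pos hz]
        simp only [hz]
        by_cases h0 : marg u p z = 0
        · rw [h0, zero_mul]
          exact div_nonneg (mul_nonneg (marg_nonneg hp0 _ _) (marg_nonneg hp0 _ _))
            (marg_nonneg hp0 _ _)
        · rw [show marg u p z * (marg A p (mask A z) * marg B p (mask B z) /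
              (marg u p z * marg w p (mask w z))) =
              marg u p z * (marg A p (mask A z) * marg B p (mask B z)) /
              (marg u p z * marg w p (mask w z)) by ring,
            mul_div_mul_left _ _ h0]
      · rw [marg_not_masked hz, if_neg hz, zero_mul]
    have e3 : ∑ z, (if mask u z = z then
          marg A p (mask A z) * marg B p (mask B z) / marg w p (mask w z) else 0) ≤ 1 := by
      have ebij : ∑ z, (if mask u z = z then
            marg A p (mask A z) * marg B p (mask B z) / marg w p (mask w z) else 0)
          = ∑ ab ∈ univ.filter (fun ab : (Fin n → Bool) × (Fin n → Bool) =>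
              mask A ab.1 = ab.1 ∧ mask B ab.2 = ab.2 ∧ mask w ab.1 = mask w ab.2),
            marg A p ab.1 * marg B p ab.2 / marg w p (mask w ab.1) := by
        rw [← Finset.sum_filter]
        refine Finset.sum_nbij' (fun z => (mask A z, mask B z))
          (fun ab => fun i => ab.1 i || ab.2 i) ?_ ?_ ?_ ?_ ?_
        · intro z hz
          simp only [Finset.mem_filter, Finset.mem_univ, true_and]
          exact ⟨mask_idem _ _, mask_idem _ _, by rw [mask_mask hwA, mask_mask hwB]⟩
        · intro ab hab
          simp only [Finset.mem_filter, Finset.mem_univ, true_and] at hab ⊢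
          obtain ⟨ha, hb, _⟩ := hab
          funext i
          have hai := congrFun ha i
          have hbi := congrFun hb i
          simp only [mask, hu] at hai hbi ⊢
          cases hA : A i <;> cases hB : B i <;> simp_all
        · intro z hz
          simp only [Finset.mem_filter, Finset.mem_univ, true_and] at hz
          funext i
          have hzi := congrFun hz i
          simp only [mask, hu] at hzi ⊢
          cases hA : A i <;> cases hB : B i <;> simp_all
        · intro ab hab
          simp only [Finset.mem_filter, Finset.mem_univ, true_and] at hab
          obtain ⟨ha, hb, hw3⟩ := hab
          have key : ∀ i, (mask A (fun i => ab.1 i || ab.2 i)) i = ab.1 i ∧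
              (mask B (fun i => ab.1 i || ab.2 i)) i = ab.2 i := by
            intro i
            have hai := congrFun ha i
            have hbi := congrFun hb i
            have hwi := congrFun hw3 i
            simp only [mask, hw] at hai hbi hwi ⊢
            cases hA : A i <;> cases hB : B i <;> simp_all
          exact Prod.ext (funext fun i => (key i).1) (funext fun i => (key i).2)
        · intro z hz
          simp only
          rw [mask_mask hwA]
      rw [ebij, Finset.sum_filter]
      have epoint : ∀ a b : Fin n → Bool,
          (if mask A a = a ∧ mask B b = b ∧ mask w a = mask w b then
            marg A p a * marg B p b / marg w p (mask w a) else 0)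
          = marg A p a / marg w p (mask w a) *
            (if mask w b = mask w a then marg B p b else 0) := by
        intro a b
        by_cases h3 : mask w b = mask w a
        · rw [if_pos h3]
          by_cases h1 : mask A a = a
          · by_cases h2 : mask B b = b
            · rw [if_pos ⟨h1, h2, h3.symm⟩]; ring
            · rw [if_neg (by tauto), marg_not_masked h2, mul_zero]
          · rw [if_neg (by tauto), marg_not_masked h1, zero_div, zero_mul]
        · rw [if_neg (by tauto), if_neg h3, mul_zero]
      rw [Fintype.sum_prod_type]
      calc ∑ a, ∑ b, (if mask A a = a ∧ mask B b = b ∧ mask w a = mask w b then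
              marg A p a * marg B p b / marg w p (mask w a) else 0)
          = ∑ a, marg A p a / marg w p (mask w a) * marg w p (mask w a) := by
            refine Finset.sum_congr rfl fun a _ => ?_
            rw [Finset.sum_congr rfl fun b _ => epoint a b]
            rw [← Finset.mul_sum, marg_fiber hwB (mask_idem w a)]
        _ ≤ ∑ a, marg A p a := by
            apply Finset.sum_le_sum
            intro a _
            by_cases h0 : marg w p (mask w a) = 0
            · rw [h0, mul_zero]; exact marg_nonneg hp0 _ _
            · rw [div_mul_cancel₀ _ h0]
        _ = 1 := sum_marg hp A
    calc ∑ x, p x * r x = _ := e1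
      _ ≤ _ := e2
      _ ≤ 1 := e3
  -- pointwise log inequality and conclusion
  set SA : ℝ := ∑ x, p x * Real.log (MA x) with hSA
  set SB : ℝ := ∑ x, p x * Real.log (MB x) with hSB
  set Su : ℝ := ∑ x, p x * Real.log (Mu x) with hSu
  set Sw : ℝ := ∑ x, p x * Real.log (Mw x) with hSw
  have Lsum : 0 ≤ Su + Sw - SA - SB := by
    have hptwise : ∀ x, p x * (1 - r x) ≤
        p x * (Real.log (Mu x) + Real.log (Mw x) - Real.log (MA x) - Real.log (MB x)) := by
      intro x
      rcases (hp0 x).eq_or_lt with hx | hx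
      · rw [← hx]; simp
      · have hMu0 : 0 < Mu x := lt_of_lt_of_le hx (le_marg hp0 u x)
        have hMA0 : 0 < MA x := lt_of_lt_of_le hx (le_marg hp0 A x)
        have hMB0 : 0 < MB x := lt_of_lt_of_le hx (le_marg hp0 B x)
        have hMw0 : 0 < Mw x := lt_of_lt_of_le hx (le_marg hp0 w x)
        have hr0 : 0 < r x := div_pos (mul_pos hMA0 hMB0) (mul_pos hMu0 hMw0)
        have hlog : Real.log (r x) ≤ r x - 1 := Real.log_le_sub_one_of_pos hr0
        have hlogr : Real.log (r x) =
            Real.log (MA x) + Real.log (MB x) - (Real.log (Mu x) + Real.log (Mw x)) := by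
          rw [hr]
          simp only
          rw [Real.log_div (mul_pos hMA0 hMB0).ne' (mul_pos hMu0 hMw0).ne',
            Real.log_mul hMA0.ne' hMB0.ne', Real.log_mul hMu0.ne' hMw0.ne']
        apply mul_le_mul_of_nonneg_left _ (hp0 x)
        linarith
    have hsum := Finset.sum_le_sum (s := (univ : Finset (Fin n → Bool))) (fun x _ => hptwise x)
    have e4 : ∑ x, p x * (1 - r x) = 1 - ∑ x, p x * r x := by
      simp_rw [mul_sub, mul_one]
      rw [Finset.sum_sub_distrib, hp.2]
    have e5 : ∑ x, p x * (Real.log (Mu x) + Real.log (Mw x) - Real.log (MA x) - Real.log (MB x))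
        = Su + Sw - SA - SB := by
      have hx : ∀ x : Fin n → Bool, p x *
          (Real.log (Mu x) + Real.log (Mw x) - Real.log (MA x) - Real.log (MB x))
          = p x * Real.log (Mu x) + p x * Real.log (Mw x) - p x * Real.log (MA x)
            - p x * Real.log (MB x) := fun x => by ring
      simp_rw [hx]
      rw [Finset.sum_sub_distrib, Finset.sum_sub_distrib, Finset.sum_add_distrib]
    rw [e4, e5] at hsum
    linarith
  have hlog2 : (0:ℝ) < Real.log 2 := Real.log_pos (by norm_num)
  have hrw : ∀ σ : Fin n → Bool, H2 (marg σ p) =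
      -((∑ x, p x * Real.log (marg σ p (mask σ x))) / Real.log 2) := by
    intro σ
    rw [H2_marg]
    congr 1
    rw [Finset.sum_div]
    refine Finset.sum_congr rfl fun x _ => ?_
    rw [Real.logb, mul_div_assoc]
  rw [hrw, hrw, hrw, hrw]
  have key2 : (SA + SB) / Real.log 2 ≤ (Su + Sw) / Real.log 2 := by
    apply div_le_div_of_nonneg_right ?_ hlog2.le
    linarith
  have eSA : ∑ x, p x * Real.log (marg A p (mask A x)) = SA := rfl
  have eSB : ∑ x, p x * Real.log (marg B p (mask B x)) = SB := rfl
  have eSu : ∑ x, p x * Real.log (marg u p (mask u x)) = Su := rfl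
  have eSw : ∑ x, p x * Real.log (marg w p (mask w x)) = Sw := rfl
  rw [eSA, eSB, eSu, eSw]
  have : (SA + SB) / Real.log 2 = SA / Real.log 2 + SB / Real.log 2 := add_div _ _ _
  have : (Su + Sw) / Real.log 2 = Su / Real.log 2 + Sw / Real.log 2 := add_div _ _ _
  linarith [key2, add_div SA SB (Real.log 2), add_div Su Sw (Real.log 2)]

end BECaux

namespace BECaux
variable {n : ℕ}

def enc (τ z : Fin n → Bool) : Fin n → Option Bool :=
  fun i => if τ i then some (z i) else none

noncomputable def wgt (s : ℝ) (σ : Fin n → Bool) : ℝ := ∏ i, if σ i then s else 1 - s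

lemma sum_enc (F : (Fin n → Option Bool) → ℝ) :
    ∑ y, F y = ∑ τ : Fin n → Bool, ∑ z : Fin n → Bool,
      (if mask τ z = z then F (enc τ z) else 0) := by
  have h1 : ∑ y, F y = ∑ tz ∈ univ.filter
      (fun tz : (Fin n → Bool) × (Fin n → Bool) => mask tz.1 tz.2 = tz.2),
      F (enc tz.1 tz.2) := by
    refine Finset.sum_nbij' (fun y => (fun i => (y i).isSome, fun i => (y i).getD false))
      (fun tz => enc tz.1 tz.2) ?_ ?_ ?_ ?_ ?_
    · intro y _
      simp only [Finset.mem_filter, Finset.mem_univ, true_and]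
      funext i
      cases h : y i <;> simp [mask, h]
    · intro tz _; exact Finset.mem_univ _
    · intro y _
      funext i
      simp only [enc]
      cases h : y i <;> simp [h]
    · intro tz htz
      simp only [Finset.mem_filter, Finset.mem_univ, true_and] at htz
      have hfun := congrFun htz
      ext i
      · simp only [enc]
        cases h : tz.1 i <;> simp [h]
      · have hi := hfun i
        simp only [mask] at hi
        simp only [enc]
        cases h : tz.1 i
        · simp only [h] at hi ⊢
          simp at hi ⊢
          simp [hi]
        · simp [h]
    · intro y _
      congr 1
      funext i
      simp only [enc]
      cases h : y i <;> simp [h]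
  rw [h1, Finset.sum_filter, Fintype.sum_prod_type]

lemma wgt_nonneg {s : ℝ} (hs0 : 0 ≤ s) (hs1 : s ≤ 1) (σ : Fin n → Bool) : 0 ≤ wgt s σ :=
  Finset.prod_nonneg fun i _ => by split_ifs <;> linarith

lemma sum_prod_bool (f : Fin n → Bool → ℝ) :
    ∑ σ : Fin n → Bool, ∏ i, f i (σ i) = ∏ i, (f i true + f i false) := by
  rw [show (∏ i, (f i true + f i false)) = ∏ i, ∑ b, f i b from
    Finset.prod_congr rfl fun i _ => by simp, Fintype.prod_sum]

lemma sum_wgt {s : ℝ} : ∑ σ : Fin n → Bool, wgt s σ = 1 := by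
  unfold wgt
  rw [sum_prod_bool fun i b => if b then s else 1 - s]
  simp

lemma wgt_k {s : ℝ} (k : Fin n) :
    ∑ σ : Fin n → Bool, wgt s σ * (if σ k then 1 else 0) = s := by
  have h1 : ∀ σ : Fin n → Bool, wgt s σ * (if σ k then 1 else 0)
      = ∏ i, ((if σ i then s else 1 - s) * (if i = k then (if σ i then 1 else 0) else 1)) := by
    intro σ
    rw [Finset.prod_mul_distrib]
    unfold wgt
    congr 1
    rw [Finset.prod_ite_eq' univ k (fun i => if σ i then (1:ℝ) else 0)]
    simp
  simp_rw [h1]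
  rw [sum_prod_bool fun i b => (if b then s else 1 - s) * (if i = k then (if b then (1:ℝ) else 0) else 1)]
  have h2 : ∀ i : Fin n, (if (true:Bool) then s else 1-s) * (if i = k then (if (true:Bool) then (1:ℝ) else 0) else 1)
      + (if (false:Bool) then s else 1-s) * (if i = k then (if (false:Bool) then (1:ℝ) else 0) else 1)
      = if i = k then s else 1 := by
    intro i; rcases eq_or_ne i k with h | h <;> simp [h]
  rw [Finset.prod_congr rfl fun i _ => h2 i, Finset.prod_ite_eq' univ k (fun _ => s)]
  simp

lemma prod_becW (s : ℝ) (x τ z : Fin n → Bool) (hz : mask τ z = z) :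
    ∏ i, becW s (x i) (enc τ z i) = if z = mask τ x then wgt s τ else 0 := by
  by_cases h : z = mask τ x
  · rw [if_pos h]
    unfold wgt
    refine Finset.prod_congr rfl fun i _ => ?_
    have hzi : z i = (if τ i then x i else false) := by
      rw [h]; cases ht : τ i <;> simp [mask, ht]
    cases ht : τ i
    · simp [enc, ht, becW]
    · simp only [enc, ht, if_true]
      rw [ht] at hzi; simp at hzi
      simp [becW, hzi]
  · rw [if_neg h]
    have : ∃ i, z i ≠ mask τ x i := by
      by_contra hc
      push_neg at hc
      exact h (funext hc)
    obtain ⟨i, hi⟩ := this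
    apply Finset.prod_eq_zero (Finset.mem_univ i)
    have ht : τ i = true := by
      by_contra ht
      simp at ht
      apply hi
      rw [← congrFun hz i]
      simp [mask, ht]
    have hzx : z i ≠ x i := by simpa [mask, ht] using hi
    simp [enc, ht, becW, hzx]

lemma sum_becW (s : ℝ) (c : Bool) : ∑ o : Option Bool, becW s c o = 1 := by
  rw [Fintype.sum_option]
  have : ∑ b : Bool, becW s c (some b) = s := by
    simp only [becW]
    rw [Fintype.sum_ite_eq' c (fun _ => s)]
  rw [this]
  show 1 - s + s = 1
  ring

lemma logb_mul_nn {a b : ℝ} (ha : 0 ≤ a) (hb : 0 ≤ b) :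
    a * b * Real.logb 2 (a * b) = a * b * Real.logb 2 a + a * b * Real.logb 2 b := by
  rcases ha.eq_or_lt with h | h
  · rw [← h]; simp
  rcases hb.eq_or_lt with h' | h'
  · rw [← h']; simp
  rw [Real.logb_mul h.ne' h'.ne']
  ring

end BECaux

namespace BECaux
variable {n : ℕ}

noncomputable def q (s : ℝ) (p : (Fin n → Bool) → ℝ) :
    (Fin n → Bool) × (Fin n → Option Bool) → ℝ :=
  fun xy => p xy.1 * ∏ i, becW s (xy.1 i) (xy.2 i)

lemma margL_q (s : ℝ) (p : (Fin n → Bool) → ℝ) : margL (q s p) = p := by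
  funext x
  unfold margL q
  simp only
  rw [← Finset.mul_sum, ← Fintype.prod_sum,
    Finset.prod_congr rfl fun i (_ : i ∈ univ) => sum_becW s (x i)]
  simp

lemma q_enc (s : ℝ) (p : (Fin n → Bool) → ℝ) (x τ z : Fin n → Bool) (hz : mask τ z = z) :
    q s p (x, enc τ z) = if z = mask τ x then p x * wgt s τ else 0 := by
  unfold q
  simp only
  rw [prod_becW s x τ z hz]
  split_ifs <;> simp

lemma H2_q (s : ℝ) (hs0 : 0 ≤ s) (hs1 : s ≤ 1) (p : (Fin n → Bool) → ℝ) (hp : IsPMF p) :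
    H2 (q s p) = H2 p + (-∑ τ : Fin n → Bool, wgt s τ * Real.logb 2 (wgt s τ)) := by
  unfold H2
  rw [Fintype.sum_prod_type]
  have inner : ∀ x, (∑ y, q s p (x, y) * Real.logb 2 (q s p (x, y)))
      = ∑ τ : Fin n → Bool, (p x * wgt s τ) * Real.logb 2 (p x * wgt s τ) := by
    intro x
    rw [sum_enc (fun y => q s p (x, y) * Real.logb 2 (q s p (x, y)))]
    refine Finset.sum_congr rfl fun τ _ => ?_
    have hsummand : ∀ z : Fin n → Bool, (if mask τ z = z then
        q s p (x, enc τ z) * Real.logb 2 (q s p (x, enc τ z)) else 0)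
        = if z = mask τ x then (p x * wgt s τ) * Real.logb 2 (p x * wgt s τ) else 0 := by
      intro z
      by_cases hz : mask τ z = z
      · rw [if_pos hz, q_enc s p x τ z hz]
        by_cases he : z = mask τ x
        · rw [if_pos he, if_pos he]
        · rw [if_neg he, if_neg he]; simp
      · rw [if_neg hz, if_neg]
        intro he; exact hz (by rw [he, mask_idem])
    rw [Finset.sum_congr rfl fun z _ => hsummand z,
      Finset.sum_ite_eq' univ (mask τ x)
        (fun _ => (p x * wgt s τ) * Real.logb 2 (p x * wgt s τ))]
    simp
  rw [Finset.sum_congr rfl fun x _ => inner x]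
  have expand : ∀ (x : Fin n → Bool) (τ : Fin n → Bool),
      (p x * wgt s τ) * Real.logb 2 (p x * wgt s τ)
      = (p x * Real.logb 2 (p x)) * wgt s τ + p x * (wgt s τ * Real.logb 2 (wgt s τ)) := by
    intro x τ
    rw [logb_mul_nn (hp.1 x) (wgt_nonneg hs0 hs1 τ)]
    ring
  have e1 : ∀ x, ∑ τ : Fin n → Bool, (p x * wgt s τ) * Real.logb 2 (p x * wgt s τ)
      = p x * Real.logb 2 (p x) + p x * (∑ τ : Fin n → Bool, wgt s τ * Real.logb 2 (wgt s τ)) := by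
    intro x
    rw [Finset.sum_congr rfl fun τ _ => expand x τ, Finset.sum_add_distrib,
      ← Finset.mul_sum, ← Finset.mul_sum, sum_wgt, mul_one]
  rw [Finset.sum_congr rfl fun x _ => e1 x, Finset.sum_add_distrib, ← Finset.sum_mul, hp.2,
    one_mul]
  ring

lemma margR_enc (s : ℝ) (p : (Fin n → Bool) → ℝ) (τ z : Fin n → Bool) (hz : mask τ z = z) :
    margR (q s p) (enc τ z) = wgt s τ * marg τ p z := by
  unfold margR
  rw [Finset.sum_congr rfl fun x _ => q_enc s p x τ z hz]
  have h1 : ∀ x : Fin n → Bool, (if z = mask τ x then p x * wgt s τ else 0)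
      = (if mask τ x = z then p x else 0) * wgt s τ := by
    intro x
    by_cases h : z = mask τ x
    · rw [if_pos h, if_pos h.symm]
    · rw [if_neg h, if_neg fun hh => h hh.symm, zero_mul]
  rw [Finset.sum_congr rfl fun x _ => h1 x, ← Finset.sum_mul]
  unfold marg
  rw [if_pos hz, mul_comm]

lemma H2_margR (s : ℝ) (hs0 : 0 ≤ s) (hs1 : s ≤ 1) (p : (Fin n → Bool) → ℝ) (hp : IsPMF p) :
    H2 (margR (q s p)) = (-∑ τ : Fin n → Bool, wgt s τ * Real.logb 2 (wgt s τ))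
      + ∑ τ : Fin n → Bool, wgt s τ * H2 (marg τ p) := by
  unfold H2
  rw [sum_enc (fun y => margR (q s p) y * Real.logb 2 (margR (q s p) y))]
  have e0 : ∀ τ z : Fin n → Bool, (if mask τ z = z then
        margR (q s p) (enc τ z) * Real.logb 2 (margR (q s p) (enc τ z)) else 0)
      = (wgt s τ * marg τ p z) * Real.logb 2 (wgt s τ * marg τ p z) := by
    intro τ z
    by_cases hz : mask τ z = z
    · rw [if_pos hz, margR_enc s p τ z hz]
    · rw [if_neg hz, marg_not_masked (p := p) hz]
      simp
  rw [Finset.sum_congr rfl fun τ _ => Finset.sum_congr rfl fun z _ => e0 τ z]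
  have e1 : ∀ τ : Fin n → Bool, ∑ z : Fin n → Bool,
      (wgt s τ * marg τ p z) * Real.logb 2 (wgt s τ * marg τ p z)
      = wgt s τ * Real.logb 2 (wgt s τ) + wgt s τ * (∑ z, marg τ p z * Real.logb 2 (marg τ p z)) := by
    intro τ
    have expand : ∀ z, (wgt s τ * marg τ p z) * Real.logb 2 (wgt s τ * marg τ p z)
        = (wgt s τ * Real.logb 2 (wgt s τ)) * marg τ p z
          + wgt s τ * (marg τ p z * Real.logb 2 (marg τ p z)) := by
      intro z
      rw [logb_mul_nn (wgt_nonneg hs0 hs1 τ) (marg_nonneg hp.1 τ z)]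
      ring
    rw [Finset.sum_congr rfl fun z _ => expand z, Finset.sum_add_distrib,
      ← Finset.mul_sum, ← Finset.mul_sum, sum_marg hp, mul_one]
  rw [Finset.sum_congr rfl fun τ _ => e1 τ, Finset.sum_add_distrib]
  have e3 : ∑ τ : Fin n → Bool,
        wgt s τ * -∑ z : Fin n → Bool, marg τ p z * Real.logb 2 (marg τ p z)
      = -∑ τ : Fin n → Bool,
          wgt s τ * ∑ z : Fin n → Bool, marg τ p z * Real.logb 2 (marg τ p z) := by
    rw [← Finset.sum_neg_distrib]
    exact Finset.sum_congr rfl fun τ _ => by ring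
  rw [e3]
  ring

lemma MI_bec (s : ℝ) (hs0 : 0 ≤ s) (hs1 : s ≤ 1) (p : (Fin n → Bool) → ℝ) (hp : IsPMF p) :
    MI (q s p) = ∑ τ : Fin n → Bool, wgt s τ * H2 (marg τ p) := by
  unfold MI
  rw [margL_q, H2_q s hs0 hs1 p hp, H2_margR s hs0 hs1 p hp]
  ring

end BECaux

namespace BECaux
variable {n : ℕ}

lemma ind_eq_prod (f g : Fin n → Bool) :
    (if f = g then (1:ℝ) else 0) = ∏ i, (if f i = g i then (1:ℝ) else 0) := by
  by_cases h : f = g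
  · rw [if_pos h]
    symm
    exact Finset.prod_eq_one fun i _ => if_pos (congrFun h i)
  · rw [if_neg h]
    have hne : ∃ i, f i ≠ g i := by
      by_contra hc; push_neg at hc; exact h (funext hc)
    obtain ⟨i, hi⟩ := hne
    symm
    exact Finset.prod_eq_zero (Finset.mem_univ i) (if_neg hi)

lemma wgt_mul (t t' : ℝ) (U : Fin n → Bool) :
    wgt (t * t') U = ∑ T : Fin n → Bool, ∑ S : Fin n → Bool,
      wgt t T * wgt t' S * (if (fun i => T i && S i) = U then (1:ℝ) else 0) := by
  set c : Fin n → Bool → Bool → ℝ := fun i a b =>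
    (if a then t else 1 - t) * (if b then t' else 1 - t') *
      (if (a && b) = U i then (1:ℝ) else 0) with hc
  have h1 : ∀ T S : Fin n → Bool,
      wgt t T * wgt t' S * (if (fun i => T i && S i) = U then (1:ℝ) else 0)
      = ∏ i, c i (T i) (S i) := by
    intro T S
    rw [ind_eq_prod (fun i => T i && S i) U]
    unfold wgt
    rw [← Finset.prod_mul_distrib, ← Finset.prod_mul_distrib]
  have h2 : ∀ T : Fin n → Bool, ∑ S : Fin n → Bool, ∏ i, c i (T i) (S i)
      = ∏ i, (c i (T i) true + c i (T i) false) :=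
    fun T => sum_prod_bool (fun i b => c i (T i) b)
  have h3 : ∑ T : Fin n → Bool, ∏ i, (c i (T i) true + c i (T i) false)
      = ∏ i, ((c i true true + c i true false) + (c i false true + c i false false)) :=
    sum_prod_bool (fun i a => c i a true + c i a false)
  have h4 : ∀ i : Fin n, (c i true true + c i true false) + (c i false true + c i false false)
      = if U i then t * t' else 1 - t * t' := by
    intro i
    cases hU : U i <;> simp [hc, hU] <;> ring
  calc wgt (t * t') U = ∏ i, ((c i true true + c i true false) + (c i false true + c i false false)) := by
        unfold wgt
        exact Finset.prod_congr rfl fun i _ => (h4 i).symm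
    _ = ∑ T : Fin n → Bool, ∏ i, (c i (T i) true + c i (T i) false) := h3.symm
    _ = ∑ T : Fin n → Bool, ∑ S : Fin n → Bool, ∏ i, c i (T i) (S i) :=
        Finset.sum_congr rfl fun T _ => (h2 T).symm
    _ = _ := Finset.sum_congr rfl fun T _ => Finset.sum_congr rfl fun S _ => (h1 T S).symm

lemma wgt_comp (t t' : ℝ) (F : (Fin n → Bool) → ℝ) :
    ∑ U : Fin n → Bool, wgt (t * t') U * F U
      = ∑ T : Fin n → Bool, ∑ S : Fin n → Bool,
          wgt t T * wgt t' S * F (fun i => T i && S i) := by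
  have h0 : ∀ U : Fin n → Bool, wgt (t * t') U * F U = ∑ T : Fin n → Bool, ∑ S : Fin n → Bool,
      wgt t T * wgt t' S * (if (fun i => T i && S i) = U then F U else 0) := by
    intro U
    rw [wgt_mul t t' U, Finset.sum_mul]
    refine Finset.sum_congr rfl fun T _ => ?_
    rw [Finset.sum_mul]
    refine Finset.sum_congr rfl fun S _ => ?_
    by_cases h : (fun i => T i && S i) = U
    · rw [if_pos h, if_pos h]; ring
    · rw [if_neg h, if_neg h]; ring
  rw [Finset.sum_congr rfl fun U (_ : U ∈ univ) => h0 U, Finset.sum_comm]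
  refine Finset.sum_congr rfl fun T _ => ?_
  rw [Finset.sum_comm]
  refine Finset.sum_congr rfl fun S _ => ?_
  have h1 : ∀ U : Fin n → Bool, wgt t T * wgt t' S * (if (fun i => T i && S i) = U then F U else 0)
      = if (fun i => T i && S i) = U then wgt t T * wgt t' S * F U else 0 := by
    intro U; split_ifs <;> ring
  rw [Finset.sum_congr rfl fun U (_ : U ∈ univ) => h1 U,
    Finset.sum_ite_eq univ (fun i => T i && S i) (fun U => wgt t T * wgt t' S * F U)]
  simp

lemma shearer_base (p : (Fin n → Bool) → ℝ) (hp : IsPMF p) (t' : ℝ) (ht'1 : t' ≤ 1)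
    (τ : Fin n → Bool) (hfalse : ∀ i, τ i = false) :
    t' * H2 (marg τ p) ≤ ∑ S : Fin n → Bool, wgt t' S * H2 (marg (fun i => τ i && S i) p) := by
  have h1 : ∀ S : Fin n → Bool, (fun i => τ i && S i) = τ := by
    intro S; funext i; rw [hfalse i]; simp
  rw [Finset.sum_congr rfl fun S (_ : S ∈ univ) => by rw [h1 S], H2_marg_false hp hfalse]
  simp

lemma shearer (p : (Fin n → Bool) → ℝ) (hp : IsPMF p) (t' : ℝ) (ht'0 : 0 ≤ t') (ht'1 : t' ≤ 1) :
    ∀ m : ℕ, ∀ τ : Fin n → Bool, (univ.filter (fun i => τ i = true)).card ≤ m →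
      t' * H2 (marg τ p) ≤ ∑ S : Fin n → Bool, wgt t' S * H2 (marg (fun i => τ i && S i) p) := by
  intro m
  induction m with
  | zero =>
    intro τ hτ
    refine shearer_base p hp t' ht'1 τ fun i => ?_
    by_contra h
    have hmem : i ∈ univ.filter (fun i => τ i = true) := by
      simp only [Finset.mem_filter, Finset.mem_univ, true_and]
      exact Bool.not_eq_false _ |>.mp h
    have := Finset.card_pos.mpr ⟨i, hmem⟩
    omega
  | succ m ih =>
    intro τ hτ
    by_cases hex : ∃ k, τ k = true
    · obtain ⟨k, hk⟩ := hex
      set τ' : Fin n → Bool := Function.update τ k false with hτ'def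
      have hτ'k : τ' k = false := by simp [hτ'def]
      have hτ'i : ∀ i, i ≠ k → τ' i = τ i := by
        intro i hi; simp [hτ'def, Function.update_of_ne hi]
      have hcard : (univ.filter (fun i => τ' i = true)).card ≤ m := by
        have he : univ.filter (fun i => τ' i = true)
            = (univ.filter (fun i => τ i = true)).erase k := by
          ext i
          simp only [Finset.mem_filter, Finset.mem_univ, true_and, Finset.mem_erase]
          constructor
          · intro hi
            have hik : i ≠ k := fun h => by rw [h, hτ'k] at hi; exact Bool.false_ne_true hi
            exact ⟨hik, by rw [← hτ'i i hik]; exact hi⟩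
          · rintro ⟨hik, hi⟩
            rw [hτ'i i hik]; exact hi
        rw [he, Finset.card_erase_of_mem (by simp [hk])]
        omega
      have IH := ih τ' hcard
      set d : ℝ := H2 (marg τ p) - H2 (marg τ' p) with hd
      have inner : ∀ S : Fin n → Bool,
          H2 (marg (fun i => τ' i && S i) p) + (if S k then d else 0)
            ≤ H2 (marg (fun i => τ i && S i) p) := by
        intro S
        cases hS : S k
        · have heq : (fun i => τ i && S i) = (fun i => τ' i && S i) := by
            funext i
            by_cases hik : i = k
            · subst hik; rw [hS, hτ'k]; simp
            · rw [hτ'i i hik]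
          rw [heq, if_neg (by simp), add_zero]
        · set A : Fin n → Bool := fun i => (τ' i && S i) || decide (i = k) with hA
          have sub := submod hp A τ'
          have eA : A = fun i => τ i && S i := by
            funext i
            by_cases hik : i = k
            · subst hik; simp [hA, hτ'k, hk, hS]
            · simp [hA, hik, hτ'i i hik]
          have eu : (fun i => A i || τ' i) = τ := by
            funext i
            by_cases hik : i = k
            · subst hik; simp [hA, hτ'k, hk]
            · simp only [hA, hik, decide_false, Bool.or_false]
              rw [hτ'i i hik]
              cases τ i <;> cases S i <;> simp
          have ew : (fun i => A i && τ' i) = fun i => τ' i && S i := by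
            funext i
            by_cases hik : i = k
            · subst hik; simp [hA, hτ'k]
            · simp only [hA, hik, decide_false, Bool.or_false]
              cases h1 : τ' i <;> cases S i <;> simp
          rw [eu, ew, eA] at sub
          rw [if_pos rfl, hd]
          linarith
      have hsum1 : ∑ S : Fin n → Bool, wgt t' S *
            (H2 (marg (fun i => τ' i && S i) p) + (if S k then d else 0))
          ≤ ∑ S : Fin n → Bool, wgt t' S * H2 (marg (fun i => τ i && S i) p) :=
        Finset.sum_le_sum fun S _ =>
          mul_le_mul_of_nonneg_left (inner S) (wgt_nonneg ht'0 ht'1 S)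
      have hsum2 : ∑ S : Fin n → Bool, wgt t' S *
            (H2 (marg (fun i => τ' i && S i) p) + (if S k then d else 0))
          = (∑ S : Fin n → Bool, wgt t' S * H2 (marg (fun i => τ' i && S i) p))
            + d * ∑ S : Fin n → Bool, wgt t' S * (if S k then 1 else 0) := by
        rw [Finset.mul_sum, ← Finset.sum_add_distrib]
        refine Finset.sum_congr rfl fun S _ => ?_
        cases hS : S k <;> simp [hS] <;> ring
      rw [hsum2, wgt_k k] at hsum1
      have hτH : t' * H2 (marg τ p) = t' * H2 (marg τ' p) + d * t' := by rw [hd]; ring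
      linarith
    · push_neg at hex
      exact shearer_base p hp t' ht'1 τ fun i => Bool.eq_false_iff.mpr (hex i)

end BECaux


/-- Degrading a BEC of survival probability `t` by a further erasure stage of survival
probability `t'` (yielding a BEC of survival probability `t·t'`) loses at most a factor
`t'` of mutual information: `I(Xⁿ;Zⁿ) ≥ t'·I(Xⁿ;Yⁿ(t))`. -/
theorem bec_cascade_mi_lower_bound (n : ℕ) (p : (Fin n → Bool) → ℝ) (hp : IsPMF p)
    (t t' : ℝ) (ht0 : 0 < t) (ht1 : t ≤ 1) (ht'0 : 0 ≤ t') (ht'1 : t' ≤ 1) :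
    t' * MI (fun xy : (Fin n → Bool) × (Fin n → Option Bool) =>
        p xy.1 * ∏ i, becW t (xy.1 i) (xy.2 i)) ≤
    MI (fun xy : (Fin n → Bool) × (Fin n → Option Bool) =>
        p xy.1 * ∏ i, becW (t * t') (xy.1 i) (xy.2 i)) := by
  show t' * MI (BECaux.q t p) ≤ MI (BECaux.q (t * t') p)
  rw [BECaux.MI_bec t ht0.le ht1 p hp,
    BECaux.MI_bec (t * t') (mul_nonneg ht0.le ht'0) (mul_le_one₀ ht1 ht'0 ht'1) p hp,
    BECaux.wgt_comp t t' (fun U => H2 (BECaux.marg U p)), Finset.mul_sum]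
  apply Finset.sum_le_sum
  intro T _
  have hsh := BECaux.shearer p hp t' ht'0 ht'1
    ((univ.filter (fun i => T i = true)).card) T le_rfl
  calc t' * (BECaux.wgt t T * H2 (BECaux.marg T p))
      = BECaux.wgt t T * (t' * H2 (BECaux.marg T p)) := by ring
    _ ≤ BECaux.wgt t T *
        ∑ S : Fin n → Bool, BECaux.wgt t' S * H2 (BECaux.marg (fun i => T i && S i) p) :=
      mul_le_mul_of_nonneg_left hsh (BECaux.wgt_nonneg ht0.le ht1 T)
    _ = ∑ S : Fin n → Bool, BECaux.wgt t T * BECaux.wgt t' S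
          * H2 (BECaux.marg (fun i => T i && S i) p) := by
      rw [Finset.mul_sum]
      exact Finset.sum_congr rfl fun S _ => by ring
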